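/- Let γ(s) = γ0(s) + f(s) • n0(s) be the normal graph of f over γ0, with κ0 differentiable, f twice differentiable, and (1 − κ0(s) f(s))² + (f'(s))² ≠ 0. Write cross(u, v) = u₁ v₂ − u₂ v₁. Then the signed curvature of γ satisfies cross(γ'(s), γ''(s)) / ‖γ'(s)‖³ = ((1 − κ0 f) f'' + 2 κ0 (f')² + κ0' f f' + κ0 (1 − κ0 f)²)(s) / ((1 − κ0(s) f(s))² + (f'(s))²)^{3/2}. -/

import Mathlib

open InnerProductSpace

/-- Rotation by π/2 in the Euclidean plane. -/
noncomputable def J : EuclideanSpace ℝ (Fin 2) → EuclideanSpace ℝ (Fin 2) :=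
  fun v => WithLp.toLp 2 ![-(v 1), v 0]

/-- Signed area form on the Euclidean plane: cross u v = u₁ v₂ − u₂ v₁. -/
noncomputable def cross (u v : EuclideanSpace ℝ (Fin 2)) : ℝ :=
  u 0 * v 1 - u 1 * v 0

/-- Signed curvature of the normal graph `γ = γ0 + f • n0`. -/
theorem stmt6 (γ0 T0 n0 : ℝ → EuclideanSpace ℝ (Fin 2)) (κ0 f : ℝ → ℝ)
    (hγ0 : Differentiable ℝ γ0)
    (hT0 : ∀ s, T0 s = deriv γ0 s)
    (hT0d : Differentiable ℝ T0)
    (hn0 : ∀ s, n0 s = J (T0 s))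
    (hn0d : Differentiable ℝ n0)
    (hunit : ∀ s, ‖T0 s‖ = 1)
    (hfrenetT : ∀ s, deriv T0 s = κ0 s • n0 s)
    (hfrenetN : ∀ s, deriv n0 s = (-κ0 s) • T0 s)
    (hκ0 : Differentiable ℝ κ0)
    (hf : Differentiable ℝ f)
    (hf' : Differentiable ℝ (deriv f))
    (γ : ℝ → EuclideanSpace ℝ (Fin 2))
    (hγ : ∀ s, γ s = γ0 s + f s • n0 s) :
    ∀ s, (1 - κ0 s * f s) ^ 2 + (deriv f s) ^ 2 ≠ 0 →
      cross (deriv γ s) (deriv (deriv γ) s) / ‖deriv γ s‖ ^ 3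
        = ((1 - κ0 s * f s) * deriv (deriv f) s + 2 * κ0 s * (deriv f s) ^ 2
            + deriv κ0 s * f s * deriv f s + κ0 s * (1 - κ0 s * f s) ^ 2)
          / ((1 - κ0 s * f s) ^ 2 + (deriv f s) ^ 2) ^ ((3 : ℝ) / 2) := by
  -- basic HasDerivAt facts
  have hγ0' : ∀ s, HasDerivAt γ0 (T0 s) s := fun s => by
    rw [hT0]; exact (hγ0 s).hasDerivAt
  have hT0' : ∀ s, HasDerivAt T0 (κ0 s • n0 s) s := fun s => by
    rw [← hfrenetT]; exact (hT0d s).hasDerivAt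
  have hn0' : ∀ s, HasDerivAt n0 ((-κ0 s) • T0 s) s := fun s => by
    rw [← hfrenetN]; exact (hn0d s).hasDerivAt
  have hf1 : ∀ s, HasDerivAt f (deriv f s) s := fun s => (hf s).hasDerivAt
  have hf2 : ∀ s, HasDerivAt (deriv f) (deriv (deriv f) s) s := fun s => (hf' s).hasDerivAt
  have hκ' : ∀ s, HasDerivAt κ0 (deriv κ0 s) s := fun s => (hκ0 s).hasDerivAt
  -- first derivative of γ
  have hγ' : ∀ s, HasDerivAt γ
      ((1 - κ0 s * f s) • T0 s + deriv f s • n0 s) s := fun s => by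
    have h : HasDerivAt (fun t => γ0 t + f t • n0 t)
        (T0 s + (f s • ((-κ0 s) • T0 s) + deriv f s • n0 s)) s :=
      (hγ0' s).add ((hf1 s).smul (hn0' s))
    have h2 : T0 s + (f s • ((-κ0 s) • T0 s) + deriv f s • n0 s)
        = (1 - κ0 s * f s) • T0 s + deriv f s • n0 s := by
      module
    rw [funext hγ]
    rw [h2] at h
    exact h
  have hdγ : deriv γ = fun s => (1 - κ0 s * f s) • T0 s + deriv f s • n0 s :=
    funext fun s => (hγ' s).deriv
  -- second derivative of γ
  have hγ'' : ∀ s, HasDerivAt (deriv γ)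
      ((-(deriv κ0 s * f s + κ0 s * deriv f s) - κ0 s * deriv f s) • T0 s
        + ((1 - κ0 s * f s) * κ0 s + deriv (deriv f) s) • n0 s) s := fun s => by
    have hc : HasDerivAt (fun t => 1 - κ0 t * f t)
        (-(deriv κ0 s * f s + κ0 s * deriv f s)) s := by
      have := (hasDerivAt_const s (1 : ℝ)).sub ((hκ' s).mul (hf1 s))
      exact ((hκ' s).mul (hf1 s)).const_sub 1
    have h : HasDerivAt (fun t => (1 - κ0 t * f t) • T0 t + deriv f t • n0 t)
        (((1 - κ0 s * f s) • (κ0 s • n0 s)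
            + (-(deriv κ0 s * f s + κ0 s * deriv f s)) • T0 s)
          + (deriv f s • ((-κ0 s) • T0 s) + deriv (deriv f) s • n0 s)) s :=
      (hc.smul (hT0' s)).add ((hf2 s).smul (hn0' s))
    have h2 : ((1 - κ0 s * f s) • (κ0 s • n0 s)
            + (-(deriv κ0 s * f s + κ0 s * deriv f s)) • T0 s)
          + (deriv f s • ((-κ0 s) • T0 s) + deriv (deriv f) s • n0 s)
        = (-(deriv κ0 s * f s + κ0 s * deriv f s) - κ0 s * deriv f s) • T0 s
          + ((1 - κ0 s * f s) * κ0 s + deriv (deriv f) s) • n0 s := by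
      module
    rw [hdγ]
    rw [h2] at h
    exact h
  intro s hne
  set a := 1 - κ0 s * f s with ha
  set b := deriv f s with hb
  set p := -(deriv κ0 s * f s + κ0 s * b) - κ0 s * b with hp
  set q := a * κ0 s + deriv (deriv f) s with hq
  have hd1 : deriv γ s = a • T0 s + b • n0 s := by rw [hdγ]
  have hd2 : deriv (deriv γ) s = p • T0 s + q • n0 s := (hγ'' s).deriv
  set t0 := T0 s 0 with ht0
  set t1 := T0 s 1 with ht1
  have hn0c0 : n0 s 0 = -t1 := by rw [hn0]; rfl
  have hn0c1 : n0 s 1 = t0 := by rw [hn0]; rfl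
  have hunit2 : t0 ^ 2 + t1 ^ 2 = 1 := by
    have h := hunit s
    rw [EuclideanSpace.norm_eq] at h
    simp [Fin.sum_univ_two, Real.norm_eq_abs, sq_abs] at h
    nlinarith [Real.sq_sqrt (by positivity : (t0 ^ 2 + t1 ^ 2 : ℝ) ≥ 0),
      Real.sqrt_nonneg (t0 ^ 2 + t1 ^ 2)]
  -- cross product value
  have hcross : cross (deriv γ s) (deriv (deriv γ) s) = a * q - b * p := by
    rw [hd1, hd2]
    simp only [cross, PiLp.add_apply, PiLp.smul_apply, smul_eq_mul, hn0c0, hn0c1]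
    linear_combination (a * q - b * p) * hunit2
  -- norm value
  have hnorm : ‖deriv γ s‖ = Real.sqrt (a ^ 2 + b ^ 2) := by
    rw [hd1, EuclideanSpace.norm_eq]
    simp only [Fin.sum_univ_two, PiLp.add_apply, PiLp.smul_apply, smul_eq_mul,
      hn0c0, hn0c1, Real.norm_eq_abs, sq_abs]
    congr 1
    nlinarith [hunit2]
  have hab : (0 : ℝ) ≤ a ^ 2 + b ^ 2 := by positivity
  have hnorm3 : ‖deriv γ s‖ ^ 3 = (a ^ 2 + b ^ 2) ^ ((3 : ℝ) / 2) := by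
    rw [hnorm, Real.sqrt_eq_rpow, ← Real.rpow_natCast _ 3, ← Real.rpow_mul hab]
    norm_num
  rw [hcross, hnorm3]
  congr 1
  rw [hq, hp]
  ring
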